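/- Let F be a steerable image family of radius n and angular bandlimit V, and define S₂[u] := (1/(4n²))·(1/2π)∫₀^{2π} Σ_{ℓ∈ℤ²} F_φ[ℓ]F_φ[ℓ+u] dφ. Then for every k ∈ ℤ²: (i) Ŝ₂[k] := Σ_{u∈ℤ²} S₂[u]·e^{−2πi(u·k)/(4n)} = (1/(4n²))·(1/2π)∫₀^{2π} |F̂_φ[k]|² dφ, where F̂_φ[k] := Σ_{ℓ∈ℤ²} F_φ[ℓ]·e^{−2πi(ℓ·k)/(4n)}; and (ii) Ŝ₂[k] = (1/(4n²))·(1/(4V))·Σ_{ν=0}^{4V−1} |F̂_{φ_ν}[k]|², where φ_ν := 2πν/(4V). -/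

import Mathlib

open Real MeasureTheory intervalIntegral

noncomputable section


lemma key_quad (V : ℕ) (hV : 1 ≤ V) (m : ℤ) (hm : |m| ≤ 2*V) :
    ∫ φ in (0:ℝ)..(2*π), Complex.exp (Complex.I * m * φ) =
      (2*π/(4*V) : ℝ) * ∑ j ∈ Finset.range (4*V), Complex.exp (Complex.I * m * ((2*π*j/(4*V) : ℝ) : ℂ)) := by
  have hVr : (V : ℝ) ≠ 0 := Nat.cast_ne_zero.mpr (by omega)
  have hVc : (V : ℂ) ≠ 0 := Nat.cast_ne_zero.mpr (by omega)
  rcases eq_or_ne m 0 with hm0 | hm0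
  · subst hm0
    simp only [Int.cast_zero, mul_zero, zero_mul, Complex.exp_zero]
    rw [intervalIntegral.integral_const]
    simp only [Finset.sum_const, Finset.card_range, nsmul_eq_mul, mul_one, smul_eq_mul]
    push_cast
    field_simp
    rw [Complex.real_smul]; push_cast; ring
  · have hc : Complex.I * m ≠ 0 := by
      apply mul_ne_zero Complex.I_ne_zero
      exact_mod_cast hm0
    rw [integral_exp_mul_complex hc]
    have h2π : Complex.exp (Complex.I * m * ((2*π:ℝ):ℂ)) = 1 := by
      have := Complex.exp_int_mul_two_pi_mul_I m
      rw [← this]; congr 1; push_cast; ring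
    rw [h2π]
    simp only [Complex.ofReal_zero, mul_zero, Complex.exp_zero, sub_self, zero_div]
    set ω : ℂ := Complex.exp (Complex.I * m * ((2*π/(4*V) : ℝ) : ℂ)) with hω
    have hterm : ∀ j ∈ Finset.range (4*V), Complex.exp (Complex.I * m * ((2*π*j/(4*V) : ℝ) : ℂ)) = ω ^ j := by
      intro j _
      rw [hω, ← Complex.exp_nat_mul]
      congr 1
      push_cast
      ring
    rw [Finset.sum_congr rfl hterm]
    have hωN : ω ^ (4*V) = 1 := by
      rw [hω, ← Complex.exp_nat_mul, ← h2π]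
      congr 1
      push_cast
      field_simp
    have hω1 : ω ≠ 1 := by
      intro h
      rw [hω, Complex.exp_eq_one_iff] at h
      obtain ⟨k, hk⟩ := h
      push_cast at hk
      field_simp at hk
      have hπI : ((π:ℂ) * Complex.I) ≠ 0 :=
        mul_ne_zero (Complex.ofReal_ne_zero.mpr Real.pi_ne_zero) Complex.I_ne_zero
      have hmc : (m : ℂ) = (k * (4*V) : ℤ) := by
        push_cast
        have h2 : (2*((π:ℂ)*Complex.I)) * (m:ℂ) = (2*((π:ℂ)*Complex.I)) * ((k:ℂ)*(4*(V:ℂ))) := by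
          linear_combination (2*((π:ℂ)*Complex.I)) * hk
        exact mul_left_cancel₀ (mul_ne_zero two_ne_zero hπI) h2
      have hmk : m = k * (4*V) := by exact_mod_cast hmc
      have h1 : (4*(V:ℤ)) ≤ |m| := by
        rcases eq_or_ne k 0 with rfl | hk0
        · simp at hmk; omega
        · rw [hmk, abs_mul, abs_of_nonneg (by positivity : (0:ℤ) ≤ 4*(V:ℤ))]
          exact le_mul_of_one_le_left (by positivity) (Int.one_le_abs hk0)
      have h2 : (4*(V:ℤ)) ≤ 2*(V:ℤ) := le_trans h1 hm
      omega
    rw [geom_sum_eq hω1, hωN]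
    simp


lemma sum_rotate {M : Type*} [AddCommMonoid M] (s t : Finset ℤ) (r : Finset ℕ) (f : ℤ → ℤ → ℕ → M) :
    ∑ ν ∈ s, ∑ μ ∈ t, ∑ j ∈ r, f ν μ j = ∑ j ∈ r, ∑ ν ∈ s, ∑ μ ∈ t, f ν μ j := by
  calc ∑ ν ∈ s, ∑ μ ∈ t, ∑ j ∈ r, f ν μ j
      = ∑ ν ∈ s, ∑ j ∈ r, ∑ μ ∈ t, f ν μ j :=
        Finset.sum_congr rfl (fun ν _ => Finset.sum_comm)
    _ = ∑ j ∈ r, ∑ ν ∈ s, ∑ μ ∈ t, f ν μ j := Finset.sum_comm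

def Steerable (n V : ℕ) (F : ℝ → ℤ × ℤ → ℝ) (g : ℤ → ℤ × ℤ → ℂ) : Prop :=
  (∀ ν : ℤ, ∀ ℓ : ℤ × ℤ, (n : ℤ) < max |ℓ.1| |ℓ.2| → g ν ℓ = 0) ∧
  (∀ φ : ℝ, ∀ ℓ : ℤ × ℤ,
    (F φ ℓ : ℂ) =
      ∑ ν ∈ Finset.Icc (-(V : ℤ)) (V : ℤ), g ν ℓ * Complex.exp (Complex.I * (ν : ℂ) * (φ : ℂ)))

def dftPhase (n : ℕ) (ℓ k : ℤ × ℤ) : ℂ :=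
  Complex.exp (-(2 * (π : ℂ) * Complex.I * ((ℓ.1 * k.1 + ℓ.2 * k.2 : ℤ) : ℂ)) / (4 * (n : ℂ)))

lemma dftPhase_add (n : ℕ) (a b k : ℤ × ℤ) :
    dftPhase n (a + b) k = dftPhase n a k * dftPhase n b k := by
  rw [dftPhase, dftPhase, dftPhase, ← Complex.exp_add]
  congr 1
  rw [← add_div]
  congr 1
  simp only [Prod.fst_add, Prod.snd_add]
  push_cast
  ring

lemma conj_dftPhase (n : ℕ) (ℓ k : ℤ × ℤ) :
    (starRingEnd ℂ) (dftPhase n ℓ k) = dftPhase n (-ℓ) k := by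
  rw [dftPhase, dftPhase, ← Complex.exp_conj]
  congr 1
  simp only [map_div₀, map_neg, map_mul, Complex.conj_I, map_ofNat, Complex.conj_ofReal,
    map_intCast, map_natCast, Prod.fst_neg, Prod.snd_neg]
  push_cast
  ring

theorem stmt_4 (n V : ℕ) (hn : 1 ≤ n) (hV : 1 ≤ V)
    (F : ℝ → ℤ × ℤ → ℝ) (g : ℤ → ℤ × ℤ → ℂ) (hF : Steerable n V F g)
    (S₂ : ℤ × ℤ → ℝ)
    (hS₂ : ∀ u : ℤ × ℤ, S₂ u =
      1 / (4 * (n : ℝ) ^ 2) *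
        (1 / (2 * π) * ∫ φ in (0:ℝ)..(2 * π), ∑' ℓ : ℤ × ℤ, F φ ℓ * F φ (ℓ + u)))
    (Fhat : ℝ → ℤ × ℤ → ℂ)
    (hFhat : ∀ φ : ℝ, ∀ k : ℤ × ℤ,
      Fhat φ k = ∑' ℓ : ℤ × ℤ, (F φ ℓ : ℂ) * dftPhase n ℓ k) :
    ∀ k : ℤ × ℤ,
      (∑' u : ℤ × ℤ, (S₂ u : ℂ) * dftPhase n u k) =
        ((1 / (4 * (n : ℝ) ^ 2) *
          (1 / (2 * π) * ∫ φ in (0:ℝ)..(2 * π), ‖Fhat φ k‖ ^ 2) : ℝ) : ℂ) ∧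
      (∑' u : ℤ × ℤ, (S₂ u : ℂ) * dftPhase n u k) =
        ((1 / (4 * (n : ℝ) ^ 2) *
          (1 / (4 * (V : ℝ)) * ∑ ν ∈ Finset.range (4 * V),
            ‖Fhat (2 * π * (ν : ℝ) / (4 * (V : ℝ))) k‖ ^ 2) : ℝ) : ℂ) := by
  intro k
  obtain ⟨hg, hFeq⟩ := hF
  set B : Finset (ℤ × ℤ) := Finset.Icc (-(n:ℤ), -(n:ℤ)) ((n:ℤ), (n:ℤ)) with hB
  set B2 : Finset (ℤ × ℤ) := Finset.Icc (-(2*n:ℤ), -(2*n:ℤ)) ((2*n:ℤ), (2*n:ℤ)) with hB2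
  have hmemB : ∀ ℓ : ℤ × ℤ, ℓ ∈ B ↔ (-(n:ℤ) ≤ ℓ.1 ∧ ℓ.1 ≤ n ∧ -(n:ℤ) ≤ ℓ.2 ∧ ℓ.2 ≤ n) := by
    intro ℓ; rw [hB, Finset.mem_Icc, Prod.le_def, Prod.le_def]; tauto
  have hmemB2 : ∀ u : ℤ × ℤ, u ∈ B2 ↔ (-(2*n:ℤ) ≤ u.1 ∧ u.1 ≤ 2*n ∧ -(2*n:ℤ) ≤ u.2 ∧ u.2 ≤ 2*n) := by
    intro u; rw [hB2, Finset.mem_Icc, Prod.le_def, Prod.le_def]; tauto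
  -- support of F
  have hFsupp : ∀ φ : ℝ, ∀ ℓ : ℤ × ℤ, ℓ ∉ B → F φ ℓ = 0 := by
    intro φ ℓ hℓ
    rw [hmemB] at hℓ
    have habs : (n : ℤ) < max |ℓ.1| |ℓ.2| := by
      rw [lt_max_iff, lt_abs, lt_abs]; omega
    have : (F φ ℓ : ℂ) = 0 := by
      rw [hFeq φ ℓ]
      apply Finset.sum_eq_zero
      intro ν _
      rw [hg ν ℓ habs, zero_mul]
    exact_mod_cast this
  -- continuity of F in φ
  have hcont : ∀ ℓ : ℤ × ℤ, Continuous (fun φ => F φ ℓ) := by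
    intro ℓ
    have h1 : Continuous (fun φ : ℝ =>
        (∑ ν ∈ Finset.Icc (-(V : ℤ)) (V : ℤ), g ν ℓ * Complex.exp (Complex.I * (ν : ℂ) * (φ : ℂ)))) := by
      apply continuous_finset_sum
      intro ν _
      exact continuous_const.mul (Complex.continuous_exp.comp (continuous_const.mul Complex.continuous_ofReal))
    have h2 : (fun φ => F φ ℓ) = fun φ : ℝ =>
        (∑ ν ∈ Finset.Icc (-(V : ℤ)) (V : ℤ), g ν ℓ * Complex.exp (Complex.I * (ν : ℂ) * (φ : ℂ))).re := by
      funext φ; rw [← hFeq φ ℓ, Complex.ofReal_re]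
    rw [h2]
    exact Complex.continuous_re.comp h1
  -- Fhat as finite sum
  have hFhatB : ∀ φ : ℝ, Fhat φ k = ∑ ℓ ∈ B, (F φ ℓ : ℂ) * dftPhase n ℓ k := by
    intro φ
    rw [hFhat φ k]
    apply tsum_eq_sum
    intro ℓ hℓ
    rw [hFsupp φ ℓ hℓ]; simp
  have hconjFhat : ∀ φ : ℝ, (starRingEnd ℂ) (Fhat φ k) = ∑ ℓ ∈ B, (F φ ℓ : ℂ) * dftPhase n (-ℓ) k := by
    intro φ
    rw [hFhatB φ, map_sum]
    apply Finset.sum_congr rfl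
    intro ℓ _
    rw [map_mul, Complex.conj_ofReal, conj_dftPhase]
  -- inner tsum is finite sum
  have hinner : ∀ φ : ℝ, ∀ u : ℤ × ℤ,
      (∑' ℓ : ℤ × ℤ, F φ ℓ * F φ (ℓ + u)) = ∑ ℓ ∈ B, F φ ℓ * F φ (ℓ + u) := by
    intro φ u
    apply tsum_eq_sum
    intro ℓ hℓ
    rw [hFsupp φ ℓ hℓ, zero_mul]
  -- S₂ vanishes off B2
  have hS₂supp : ∀ u : ℤ × ℤ, u ∉ B2 → S₂ u = 0 := by
    intro u hu
    rw [hS₂ u]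
    have : ∀ φ : ℝ, (∑' ℓ : ℤ × ℤ, F φ ℓ * F φ (ℓ + u)) = 0 := by
      intro φ
      rw [hinner φ u]
      apply Finset.sum_eq_zero
      intro ℓ hℓ
      rw [hmemB] at hℓ
      rw [hmemB2] at hu
      have : ℓ + u ∉ B := by
        rw [hmemB]
        simp only [Prod.fst_add, Prod.snd_add]
        omega
      rw [hFsupp φ _ this, mul_zero]
    simp only [this]
    simp
  -- Key pointwise identity
  have hstep1 : ∀ φ : ℝ, ∀ ℓ ∈ B,
      ∑ u ∈ B2, (F φ (ℓ + u) : ℂ) * dftPhase n (ℓ + u) k = Fhat φ k := by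
    intro φ ℓ hℓ
    rw [hmemB] at hℓ
    have hinj : Function.Injective (fun u : ℤ × ℤ => ℓ + u) := fun a b h => by simpa using h
    have hmap : ∑ u ∈ B2, (F φ (ℓ + u) : ℂ) * dftPhase n (ℓ + u) k =
        ∑ m ∈ B2.map ⟨fun u => ℓ + u, hinj⟩, (F φ m : ℂ) * dftPhase n m k := by
      rw [Finset.sum_map]
      simp only [Function.Embedding.coeFn_mk]
    rw [hmap, hFhatB φ]
    apply (Finset.sum_subset ?_ ?_).symm
    · intro m hm
      rw [hmemB] at hm
      simp only [Finset.mem_map, Function.Embedding.coeFn_mk]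
      refine ⟨m - ℓ, ?_, by ring⟩
      rw [hmemB2]
      simp only [Prod.fst_sub, Prod.snd_sub]
      omega
    · intro m _ hm
      rw [hFsupp φ m hm]
      simp
  have hkey : ∀ φ : ℝ,
      ∑ u ∈ B2, ((∑ ℓ ∈ B, F φ ℓ * F φ (ℓ + u) : ℝ) : ℂ) * dftPhase n u k =
        ((‖Fhat φ k‖ ^ 2 : ℝ) : ℂ) := by
    intro φ
    have hphase : ∀ (ℓ u : ℤ × ℤ), dftPhase n u k = dftPhase n (ℓ + u) k * dftPhase n (-ℓ) k := by
      intro ℓ u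
      rw [← dftPhase_add]
      congr 1
      abel
    push_cast
    calc ∑ u ∈ B2, (∑ ℓ ∈ B, (F φ ℓ : ℂ) * (F φ (ℓ + u) : ℂ)) * dftPhase n u k
        = ∑ ℓ ∈ B, ((F φ ℓ : ℂ) * dftPhase n (-ℓ) k) *
            ∑ u ∈ B2, (F φ (ℓ + u) : ℂ) * dftPhase n (ℓ + u) k := by
          simp only [Finset.sum_mul]
          rw [Finset.sum_comm]
          apply Finset.sum_congr rfl
          intro ℓ _
          rw [Finset.mul_sum]
          apply Finset.sum_congr rfl
          intro u _
          rw [hphase ℓ u]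
          ring
      _ = ∑ ℓ ∈ B, ((F φ ℓ : ℂ) * dftPhase n (-ℓ) k) * Fhat φ k := by
          apply Finset.sum_congr rfl
          intro ℓ hℓ
          rw [hstep1 φ ℓ hℓ]
      _ = (∑ ℓ ∈ B, (F φ ℓ : ℂ) * dftPhase n (-ℓ) k) * Fhat φ k := by
          rw [Finset.sum_mul]
      _ = (starRingEnd ℂ) (Fhat φ k) * Fhat φ k := by rw [hconjFhat φ]
      _ = ((‖Fhat φ k‖ : ℝ) : ℂ) ^ 2 := by
          rw [mul_comm, Complex.mul_conj, ← Complex.sq_norm]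
          push_cast
          ring
  -- PART 1
  have hcont2 : ∀ u : ℤ × ℤ, Continuous (fun φ : ℝ => ((∑ ℓ ∈ B, F φ ℓ * F φ (ℓ + u) : ℝ) : ℂ)) := by
    intro u
    apply Complex.continuous_ofReal.comp
    apply continuous_finset_sum
    intro ℓ _
    exact (hcont ℓ).mul (hcont (ℓ + u))
  have part1 : (∑' u : ℤ × ℤ, (S₂ u : ℂ) * dftPhase n u k) =
      ((1 / (4 * (n : ℝ) ^ 2) *
        (1 / (2 * π) * ∫ φ in (0:ℝ)..(2 * π), ‖Fhat φ k‖ ^ 2) : ℝ) : ℂ) := by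
    calc (∑' u : ℤ × ℤ, (S₂ u : ℂ) * dftPhase n u k)
        = ∑ u ∈ B2, (S₂ u : ℂ) * dftPhase n u k := by
          apply tsum_eq_sum
          intro u hu
          rw [hS₂supp u hu]
          simp
      _ = ∑ u ∈ B2, ((1 / (4 * (n : ℝ) ^ 2) : ℝ) : ℂ) * (((1 / (2 * π) : ℝ) : ℂ) *
            ((∫ φ in (0:ℝ)..(2 * π), ((∑ ℓ ∈ B, F φ ℓ * F φ (ℓ + u) : ℝ) : ℂ)))) * dftPhase n u k := by
          apply Finset.sum_congr rfl
          intro u _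
          rw [hS₂ u]
          have h1 : (∫ φ in (0:ℝ)..(2 * π), ∑' ℓ : ℤ × ℤ, F φ ℓ * F φ (ℓ + u)) =
              ∫ φ in (0:ℝ)..(2 * π), ∑ ℓ ∈ B, F φ ℓ * F φ (ℓ + u) := by
            apply intervalIntegral.integral_congr
            intro φ _
            exact hinner φ u
          rw [h1, intervalIntegral.integral_ofReal]
          push_cast
          ring
      _ = ((1 / (4 * (n : ℝ) ^ 2) : ℝ) : ℂ) * (((1 / (2 * π) : ℝ) : ℂ) *
            ∑ u ∈ B2, (∫ φ in (0:ℝ)..(2 * π), ((∑ ℓ ∈ B, F φ ℓ * F φ (ℓ + u) : ℝ) : ℂ)) * dftPhase n u k) := by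
          simp only [Finset.mul_sum]
          apply Finset.sum_congr rfl
          intro u _
          ring
      _ = ((1 / (4 * (n : ℝ) ^ 2) : ℝ) : ℂ) * (((1 / (2 * π) : ℝ) : ℂ) *
            ∑ u ∈ B2, ∫ φ in (0:ℝ)..(2 * π),
              ((∑ ℓ ∈ B, F φ ℓ * F φ (ℓ + u) : ℝ) : ℂ) * dftPhase n u k) := by
          congr 1
          congr 1
          apply Finset.sum_congr rfl
          intro u _
          rw [intervalIntegral.integral_mul_const]
      _ = ((1 / (4 * (n : ℝ) ^ 2) : ℝ) : ℂ) * (((1 / (2 * π) : ℝ) : ℂ) *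
            ∫ φ in (0:ℝ)..(2 * π), ∑ u ∈ B2,
              ((∑ ℓ ∈ B, F φ ℓ * F φ (ℓ + u) : ℝ) : ℂ) * dftPhase n u k) := by
          rw [intervalIntegral.integral_finset_sum]
          intro u _
          exact ((hcont2 u).mul continuous_const).intervalIntegrable _ _
      _ = ((1 / (4 * (n : ℝ) ^ 2) : ℝ) : ℂ) * (((1 / (2 * π) : ℝ) : ℂ) *
            ∫ φ in (0:ℝ)..(2 * π), ((‖Fhat φ k‖ ^ 2 : ℝ) : ℂ)) := by
          congr 1
          congr 1
          apply intervalIntegral.integral_congr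
          intro φ _
          exact hkey φ
      _ = ((1 / (4 * (n : ℝ) ^ 2) *
            (1 / (2 * π) * ∫ φ in (0:ℝ)..(2 * π), ‖Fhat φ k‖ ^ 2) : ℝ) : ℂ) := by
          rw [intervalIntegral.integral_ofReal]
          push_cast
          ring
  refine ⟨part1, ?_⟩
  -- PART 2
  set I' : Finset ℤ := Finset.Icc (-(V : ℤ)) (V : ℤ) with hI'
  set a : ℤ → ℂ := fun ν => ∑ ℓ ∈ B, g ν ℓ * dftPhase n ℓ k with ha
  have hFhat_trig : ∀ φ : ℝ, Fhat φ k = ∑ ν ∈ I', a ν * Complex.exp (Complex.I * (ν : ℂ) * (φ : ℂ)) := by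
    intro φ
    rw [hFhatB φ]
    calc ∑ ℓ ∈ B, (F φ ℓ : ℂ) * dftPhase n ℓ k
        = ∑ ℓ ∈ B, ∑ ν ∈ I', g ν ℓ * Complex.exp (Complex.I * (ν : ℂ) * (φ : ℂ)) * dftPhase n ℓ k := by
          apply Finset.sum_congr rfl
          intro ℓ _
          rw [hFeq φ ℓ, Finset.sum_mul]
      _ = ∑ ν ∈ I', ∑ ℓ ∈ B, g ν ℓ * Complex.exp (Complex.I * (ν : ℂ) * (φ : ℂ)) * dftPhase n ℓ k :=
          Finset.sum_comm
      _ = ∑ ν ∈ I', a ν * Complex.exp (Complex.I * (ν : ℂ) * (φ : ℂ)) := by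
          apply Finset.sum_congr rfl
          intro ν _
          rw [ha, Finset.sum_mul]
          apply Finset.sum_congr rfl
          intro ℓ _
          ring
  have hconj_trig : ∀ φ : ℝ, (starRingEnd ℂ) (Fhat φ k) =
      ∑ ν ∈ I', (starRingEnd ℂ) (a ν) * Complex.exp (Complex.I * ((-ν : ℤ) : ℂ) * (φ : ℂ)) := by
    intro φ
    rw [hFhat_trig φ, map_sum]
    apply Finset.sum_congr rfl
    intro ν _
    rw [map_mul, ← Complex.exp_conj]
    congr 1
    simp only [map_mul, Complex.conj_I, Complex.conj_ofReal, map_intCast]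
    push_cast
    ring
  have hH : ∀ φ : ℝ, ((‖Fhat φ k‖ ^ 2 : ℝ) : ℂ) =
      ∑ ν ∈ I', ∑ μ ∈ I', (starRingEnd ℂ) (a ν) * a μ *
        Complex.exp (Complex.I * ((μ - ν : ℤ) : ℂ) * (φ : ℂ)) := by
    intro φ
    have h0 : ((‖Fhat φ k‖ ^ 2 : ℝ) : ℂ) = (starRingEnd ℂ) (Fhat φ k) * Fhat φ k := by
      rw [mul_comm, Complex.mul_conj, ← Complex.sq_norm]
    rw [h0, hconj_trig φ, hFhat_trig φ, Finset.sum_mul_sum]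
    apply Finset.sum_congr rfl
    intro ν _
    apply Finset.sum_congr rfl
    intro μ _
    rw [mul_mul_mul_comm, ← Complex.exp_add]
    congr 1
    push_cast
    ring
  have hexpcont : ∀ m : ℤ, Continuous (fun φ : ℝ => Complex.exp (Complex.I * (m : ℂ) * (φ : ℂ))) := by
    intro m
    exact Complex.continuous_exp.comp (continuous_const.mul Complex.continuous_ofReal)
  have hquadC : (∫ φ in (0:ℝ)..(2*π), ((‖Fhat φ k‖ ^ 2 : ℝ) : ℂ)) =
      ((2*π/(4*V) : ℝ) : ℂ) * ∑ j ∈ Finset.range (4*V),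
        ((‖Fhat (2 * π * (j : ℝ) / (4 * (V:ℝ))) k‖ ^ 2 : ℝ) : ℂ) := by
    calc (∫ φ in (0:ℝ)..(2*π), ((‖Fhat φ k‖ ^ 2 : ℝ) : ℂ))
        = ∫ φ in (0:ℝ)..(2*π), ∑ ν ∈ I', ∑ μ ∈ I', (starRingEnd ℂ) (a ν) * a μ *
            Complex.exp (Complex.I * ((μ - ν : ℤ) : ℂ) * (φ : ℂ)) := by
          apply intervalIntegral.integral_congr
          intro φ _
          exact hH φ
      _ = ∑ ν ∈ I', ∑ μ ∈ I', (starRingEnd ℂ) (a ν) * a μ *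
            ∫ φ in (0:ℝ)..(2*π), Complex.exp (Complex.I * ((μ - ν : ℤ) : ℂ) * (φ : ℂ)) := by
          rw [intervalIntegral.integral_finset_sum]
          · apply Finset.sum_congr rfl
            intro ν _
            rw [intervalIntegral.integral_finset_sum]
            · apply Finset.sum_congr rfl
              intro μ _
              rw [intervalIntegral.integral_const_mul]
            · intro μ _
              exact (continuous_const.mul (hexpcont (μ - ν))).intervalIntegrable _ _
          · intro ν _
            exact (continuous_finset_sum _ (fun μ _ =>
              continuous_const.mul (hexpcont (μ - ν)))).intervalIntegrable _ _
      _ = ∑ ν ∈ I', ∑ μ ∈ I', (starRingEnd ℂ) (a ν) * a μ *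
            (((2*π/(4*V) : ℝ) : ℂ) * ∑ j ∈ Finset.range (4*V),
              Complex.exp (Complex.I * ((μ - ν : ℤ) : ℂ) * ((2*π*(j:ℝ)/(4*(V:ℝ)) : ℝ) : ℂ))) := by
          apply Finset.sum_congr rfl
          intro ν hν
          apply Finset.sum_congr rfl
          intro μ hμ
          rw [hI', Finset.mem_Icc] at hν hμ
          have hb : |μ - ν| ≤ 2*(V:ℤ) := by
            rw [abs_le]
            omega
          rw [key_quad V hV (μ - ν) hb]
      _ = ((2*π/(4*V) : ℝ) : ℂ) * ∑ j ∈ Finset.range (4*V), ∑ ν ∈ I', ∑ μ ∈ I',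
            (starRingEnd ℂ) (a ν) * a μ *
              Complex.exp (Complex.I * ((μ - ν : ℤ) : ℂ) * ((2*π*(j:ℝ)/(4*(V:ℝ)) : ℝ) : ℂ)) := by
          simp only [Finset.mul_sum]
          rw [sum_rotate]
          apply Finset.sum_congr rfl
          intro j _
          apply Finset.sum_congr rfl
          intro ν _
          apply Finset.sum_congr rfl
          intro μ _
          ring
      _ = ((2*π/(4*V) : ℝ) : ℂ) * ∑ j ∈ Finset.range (4*V),
            ((‖Fhat (2 * π * (j : ℝ) / (4 * (V:ℝ))) k‖ ^ 2 : ℝ) : ℂ) := by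
          congr 1
          apply Finset.sum_congr rfl
          intro j _
          exact (hH (2 * π * (j : ℝ) / (4 * (V:ℝ)))).symm
  have hquadR : (∫ φ in (0:ℝ)..(2*π), ‖Fhat φ k‖ ^ 2) =
      (2*π/(4*V) : ℝ) * ∑ j ∈ Finset.range (4*V),
        ‖Fhat (2 * π * (j : ℝ) / (4 * (V:ℝ))) k‖ ^ 2 := by
    have h := hquadC
    rw [intervalIntegral.integral_ofReal] at h
    exact_mod_cast h
  rw [part1, Complex.ofReal_inj, hquadR]
  have hVr : (V : ℝ) ≠ 0 := Nat.cast_ne_zero.mpr (by omega)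
  field_simp
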